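/- arXiv:math/0201288 — 3 statements merged into one kernel-verified Lean document; each statement's English description precedes it below -/
import Mathlib

section
/- The dihedral group Dₙ of order 2n contains a homoclinic triple if and only if n is a multiple of 4. -/
/-- The conjugate subgroup `g H g⁻¹`. -/
def conjSub {G : Type*} [Group G] (g : G) (H : Subgroup G) : Subgroup G :=
  H.map (MulAut.conj g).toMonoidHom

/-- `(K, g, H)` is a homoclinic triple: [HT1] the coset `gH` is disjoint from the
normalizer of `K`, and [HT2] `K` is a proper subgroup of both `H` and `gHg⁻¹`. -/
def HomoclinicTriple {G : Type*} [Group G] (K : Subgroup G) (g : G) (H : Subgroup G) : Prop :=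
  (∀ h ∈ H, g * h ∉ Subgroup.normalizer (K : Set G)) ∧ K < H ∧ K < conjSub g H

open DihedralGroup

namespace DnAux

variable {n : ℕ}

@[simp] lemma r_inv (i : ZMod n) : (r i : DihedralGroup n)⁻¹ = r (-i) := rfl
@[simp] lemma sr_inv (i : ZMod n) : (sr i : DihedralGroup n)⁻¹ = sr i := rfl

/-- The rotations belonging to a subgroup `H` form an additive subgroup of `ZMod n`. -/
def rotSub (H : Subgroup (DihedralGroup n)) : AddSubgroup (ZMod n) where
  carrier := {x | r x ∈ H}
  zero_mem' := by have := H.one_mem; rwa [one_def] at this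
  add_mem' := by intro a b ha hb; have := H.mul_mem ha hb; simpa using this
  neg_mem' := by intro a ha; have := H.inv_mem ha; simpa using this

lemma mem_rotSub {H : Subgroup (DihedralGroup n)} {x : ZMod n} :
    x ∈ rotSub H ↔ r x ∈ H := Iff.rfl

/-- If `r (y+y) ∈ K` then the rotation `r y` normalizes `K`. -/
lemma rot_mem_normalizer (K : Subgroup (DihedralGroup n)) (y : ZMod n)
    (hy : r (y + y) ∈ K) : r y ∈ Subgroup.normalizer (K : Set (DihedralGroup n)) := by
  rw [Subgroup.mem_normalizer_iff]
  rintro (i | j)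
  · have e : r y * r i * (r y)⁻¹ = r i := by
      simp only [r_inv, r_mul_r]; congr 1; ring
    rw [e]
  · have e : r y * sr j * (r y)⁻¹ = sr (j - (y + y)) := by
      simp only [r_inv, r_mul_sr, sr_mul_r]; congr 1; ring
    rw [e]
    constructor
    · intro h
      have e2 : sr j * (r (y + y))⁻¹ = sr (j - (y + y)) := by
        simp only [r_inv, sr_mul_r]; congr 1; ring
      rw [← e2]; exact K.mul_mem h (K.inv_mem hy)
    · intro h
      have e2 : sr (j - (y + y)) * r (y + y) = sr j := by
        simp only [sr_mul_r]; congr 1; ring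
      rw [← e2]; exact K.mul_mem h hy

lemma sr_shift (K : Subgroup (DihedralGroup n)) (a y j : ZMod n)
    (ha : sr a ∈ K) (hy : r (y + y - (a + a)) ∈ K) (hj : sr j ∈ K) :
    sr (y + y - j) ∈ K := by
  have h1 : r (a - j) ∈ K := by
    have := K.mul_mem hj ha; simpa using this
  have h2 : r (y + y - j - a) ∈ K := by
    have := K.mul_mem hy h1
    rw [r_mul_r] at this
    have e : y + y - (a + a) + (a - j) = y + y - j - a := by ring
    rwa [e] at this
  have h3 : sr a * r (y + y - j - a) = sr (y + y - j) := by
    simp only [sr_mul_r]; congr 1; ring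
  rw [← h3]; exact K.mul_mem ha h2

/-- If `sr a ∈ K` and `r (2y - 2a) ∈ K` then the reflection `sr y` normalizes `K`. -/
lemma sr_mem_normalizer (K : Subgroup (DihedralGroup n)) (a y : ZMod n)
    (ha : sr a ∈ K) (hy : r (y + y - (a + a)) ∈ K) : sr y ∈ Subgroup.normalizer (K : Set (DihedralGroup n)) := by
  rw [Subgroup.mem_normalizer_iff]
  rintro (i | j)
  · have e : sr y * r i * (sr y)⁻¹ = r (-i) := by
      simp only [sr_inv, sr_mul_r, sr_mul_sr]; congr 1; ring
    rw [e]
    exact ⟨fun h => by simpa using K.inv_mem h, fun h => by simpa using K.inv_mem h⟩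
  · have e : sr y * sr j * (sr y)⁻¹ = sr (y + y - j) := by
      simp only [sr_inv, sr_mul_sr, r_mul_sr]; congr 1; ring
    rw [e]
    constructor
    · exact sr_shift K a y j ha hy
    · intro h
      have := sr_shift K a y (y + y - j) ha hy h
      have e2 : y + y - (y + y - j) = j := by ring
      rwa [e2] at this

/-- A subgroup consisting only of rotations is normal. -/
lemma normalizer_of_rot (K : Subgroup (DihedralGroup n)) (hno : ∀ a, sr a ∉ K)
    (x : DihedralGroup n) : x ∈ Subgroup.normalizer (K : Set (DihedralGroup n)) := by
  rw [Subgroup.mem_normalizer_iff]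
  rintro (i | j)
  · rcases x with c | c
    · have e : r c * r i * (r c)⁻¹ = r i := by
        simp only [r_inv, r_mul_r]; congr 1; ring
      rw [e]
    · have e : sr c * r i * (sr c)⁻¹ = r (-i) := by
        simp only [sr_inv, sr_mul_r, sr_mul_sr]; congr 1; ring
      rw [e]
      exact ⟨fun h => by simpa using K.inv_mem h, fun h => by simpa using K.inv_mem h⟩
  · constructor
    · intro h; exact absurd h (hno j)
    · intro h; exfalso
      rcases x with c | c
      · have e : r c * sr j * (r c)⁻¹ = sr (j - c - c) := by
          simp only [r_inv, r_mul_sr, sr_mul_r]; congr 1; ring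
        rw [e] at h; exact hno _ h
      · have e : sr c * sr j * (sr c)⁻¹ = sr (c + c - j) := by
          simp only [sr_inv, sr_mul_sr, r_mul_sr]; congr 1; ring
        rw [e] at h; exact hno _ h

/-- If `4 ∤ n` then `2w` is twice a multiple of itself in `ZMod n`. -/
lemma half_lemma (n : ℕ) (hn : 0 < n) (h4 : ¬ 4 ∣ n) (w : ZMod n) :
    ∃ k : ℕ, k • (w + w) + k • (w + w) = w + w := by
  have hnw : ∀ v : ZMod n, n • v = 0 := fun v => by
    rw [nsmul_eq_mul, ZMod.natCast_self, zero_mul]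
  obtain ⟨u, hu_odd, hu0⟩ : ∃ u : ℕ, Odd u ∧ u • (w + w) = (0 : ZMod n) := by
    rcases Nat.even_or_odd n with he | ho
    · obtain ⟨u, hu⟩ := he
      refine ⟨u, ?_, ?_⟩
      · rcases Nat.even_or_odd u with h | h
        · obtain ⟨v, hv⟩ := h
          exact absurd ⟨v, by omega⟩ h4
        · exact h
      · have hcast : ((u + u : ℕ) : ZMod n) = 0 := by
          rw [← hu]; exact ZMod.natCast_self n
        have e2 : u • (w + w) = ((u + u : ℕ) : ZMod n) * w := by
          rw [smul_add, ← add_nsmul, nsmul_eq_mul]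
        rw [e2, hcast, zero_mul]
    · refine ⟨n, ho, ?_⟩
      rw [smul_add, hnw]; simp
  obtain ⟨k, hk⟩ := hu_odd
  refine ⟨k + 1, ?_⟩
  have e : (k + 1) • (w + w) + (k + 1) • (w + w) = (u + 1) • (w + w) := by
    rw [← add_nsmul]; congr 1; omega
  rw [e, add_nsmul, hu0, one_nsmul, zero_add]



/-- The order-2 subgroup `{1, sr 0}`. -/
def Ksub (n : ℕ) : Subgroup (DihedralGroup n) where
  carrier := {r 0, sr 0}
  one_mem' := by left; exact one_def
  mul_mem' := by
    intro x y hx hy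
    simp only [Set.mem_insert_iff, Set.mem_singleton_iff] at *
    rcases hx with rfl | rfl <;> rcases hy with rfl | rfl <;> simp
  inv_mem' := by
    intro x hx
    simp only [Set.mem_insert_iff, Set.mem_singleton_iff] at *
    rcases hx with rfl | rfl <;> simp

lemma mem_Ksub {x : DihedralGroup n} : x ∈ Ksub n ↔ x = r 0 ∨ x = sr 0 := by
  constructor
  · intro h
    change x ∈ ({r 0, sr 0} : Set (DihedralGroup n)) at h
    simpa only [Set.mem_insert_iff, Set.mem_singleton_iff] using h
  · intro h
    show x ∈ ({r 0, sr 0} : Set (DihedralGroup n))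
    simpa only [Set.mem_insert_iff, Set.mem_singleton_iff] using h

/-- The Klein-four style subgroup `{1, r q, sr 0, sr q}` when `q + q = 0`. -/
def Hsub (n : ℕ) (q : ZMod n) (hq : q + q = 0) : Subgroup (DihedralGroup n) where
  carrier := {r 0, r q, sr 0, sr q}
  one_mem' := by left; exact one_def
  mul_mem' := by
    intro x y hx hy
    have hq' : -q = q := neg_eq_of_add_eq_zero_left hq
    simp only [Set.mem_insert_iff, Set.mem_singleton_iff] at *
    rcases hx with rfl | rfl | rfl | rfl <;> rcases hy with rfl | rfl | rfl | rfl <;>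
      simp [hq, hq', sub_eq_add_neg]
  inv_mem' := by
    intro x hx
    have hq' : -q = q := neg_eq_of_add_eq_zero_left hq
    simp only [Set.mem_insert_iff, Set.mem_singleton_iff] at *
    rcases hx with rfl | rfl | rfl | rfl <;> simp [hq']

lemma mem_Hsub {q : ZMod n} {hq : q + q = 0} {x : DihedralGroup n} :
    x ∈ Hsub n q hq ↔ x = r 0 ∨ x = r q ∨ x = sr 0 ∨ x = sr q := by
  constructor
  · intro h
    change x ∈ ({r 0, r q, sr 0, sr q} : Set (DihedralGroup n)) at h
    simpa only [Set.mem_insert_iff, Set.mem_singleton_iff] using h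
  · intro h
    show x ∈ ({r 0, r q, sr 0, sr q} : Set (DihedralGroup n))
    simpa only [Set.mem_insert_iff, Set.mem_singleton_iff] using h

end DnAux

theorem Dn_triple_iff (n : ℕ) (hn : 0 < n) :
    (∃ (K H : Subgroup (DihedralGroup n)) (g : DihedralGroup n),
      HomoclinicTriple K g H) ↔ 4 ∣ n := by
  constructor
  · rintro ⟨K, H, g, hHT1, hKH, hKC⟩
    by_contra h4
    have hsr : ∃ a, sr a ∈ K := by
      by_contra hno
      push_neg at hno
      have h1 := hHT1 1 H.one_mem
      rw [mul_one] at h1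
      exact h1 (DnAux.normalizer_of_rot K hno g)
    obtain ⟨a, ha⟩ := hsr
    have haH : sr a ∈ H := hKH.le ha
    obtain ⟨h0, hh0, hEq⟩ := Subgroup.mem_map.mp (hKC.le ha)
    have hEq' : g * h0 * g⁻¹ = sr a := hEq
    have hh0' : h0 = g⁻¹ * sr a * g := by rw [← hEq']; group
    rcases g with c | c
    · -- g = r c
      have hH2 : sr (a + c + c) ∈ H := by
        have e : (r c)⁻¹ * sr a * r c = sr (a + c + c) := by
          simp only [DnAux.r_inv, r_mul_sr, sr_mul_r]; congr 1; ring
        rw [← e, ← hh0']; exact hh0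
      have hB : r (c + c) ∈ H := by
        have e : sr a * sr (a + c + c) = r (c + c) := by
          simp only [sr_mul_sr]; congr 1; ring
        rw [← e]; exact H.mul_mem haH hH2
      obtain ⟨k, hk⟩ := DnAux.half_lemma n hn h4 (-c)
      have htH : (-c + -c : ZMod n) ∈ DnAux.rotSub H := by
        rw [DnAux.mem_rotSub]
        have e : r (-c + -c : ZMod n) = (r (c + c))⁻¹ := by
          simp only [DnAux.r_inv]; congr 1; ring
        rw [e]; exact H.inv_mem hB
      have hx : r (k • (-c + -c) : ZMod n) ∈ H := nsmul_mem htH k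
      refine hHT1 (r (k • (-c + -c))) hx ?_
      rw [r_mul_r]
      apply DnAux.rot_mem_normalizer
      have e0 : ((c + k • (-c + -c)) + (c + k • (-c + -c)) : ZMod n) = 0 := by
        linear_combination hk
      rw [e0, ← one_def]
      exact K.one_mem
    · -- g = sr c
      have hH2 : sr (c - a + c) ∈ H := by
        have e : (sr c)⁻¹ * sr a * sr c = sr (c - a + c) := by
          simp only [DnAux.sr_inv, sr_mul_sr, r_mul_sr]; congr 1; ring
        rw [← e, ← hh0']; exact hh0
      have hB : r (c - a + c - a) ∈ H := by
        have e : sr a * sr (c - a + c) = r (c - a + c - a) := by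
          simp only [sr_mul_sr]
        rw [← e]; exact H.mul_mem haH hH2
      obtain ⟨k, hk⟩ := DnAux.half_lemma n hn h4 (a - c)
      have htH : ((a - c) + (a - c) : ZMod n) ∈ DnAux.rotSub H := by
        rw [DnAux.mem_rotSub]
        have e : r ((a - c) + (a - c) : ZMod n) = (r (c - a + c - a))⁻¹ := by
          simp only [DnAux.r_inv]; congr 1; ring
        rw [e]; exact H.inv_mem hB
      have hx : r (k • ((a - c) + (a - c)) : ZMod n) ∈ H := nsmul_mem htH k
      refine hHT1 (r (k • ((a - c) + (a - c)))) hx ?_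
      rw [sr_mul_r]
      apply DnAux.sr_mem_normalizer K a _ ha
      have e0 : ((c + k • ((a - c) + (a - c))) + (c + k • ((a - c) + (a - c))) - (a + a) : ZMod n) = 0 := by
        linear_combination hk
      rw [e0, ← one_def]
      exact K.one_mem
  · rintro ⟨m, rfl⟩
    have hm : 0 < m := by omega
    haveI : NeZero (4 * m) := ⟨by omega⟩
    set q : ZMod (4 * m) := ((2 * m : ℕ) : ZMod (4 * m)) with hqdef
    set p : ZMod (4 * m) := ((m : ℕ) : ZMod (4 * m)) with hpdef
    have hq : q + q = 0 := by
      have h0 : ((2 * m + 2 * m : ℕ) : ZMod (4 * m)) = 0 := by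
        have e : 2 * m + 2 * m = 4 * m := by ring
        rw [e]; exact ZMod.natCast_self _
      rw [hqdef]; push_cast at h0 ⊢; linear_combination h0
    have hpq : p + p = q := by rw [hqdef, hpdef]; push_cast; ring
    have hqne : q ≠ 0 := by
      rw [hqdef]
      intro h
      rw [ZMod.natCast_eq_zero_iff] at h
      have := Nat.le_of_dvd (by omega) h
      omega
    refine ⟨DnAux.Ksub _, DnAux.Hsub _ q hq, r p, ?_, ?_, ?_⟩
    · -- HT1
      intro h hh hmem
      have hsr0 : sr 0 ∈ DnAux.Ksub (4 * m) := DnAux.mem_Ksub.mpr (Or.inr rfl)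
      rw [Subgroup.mem_normalizer_iff] at hmem
      have hconj := (hmem (sr 0)).mp hsr0
      rw [DnAux.mem_Hsub] at hh
      rcases hh with rfl | rfl | rfl | rfl
      · have e : (r p * r 0) * sr 0 * (r p * r 0)⁻¹ = sr q := by
          simp only [r_mul_r, DnAux.r_inv, r_mul_sr, sr_mul_r]
          congr 1; linear_combination -hpq - hq
        rw [e] at hconj
        rcases DnAux.mem_Ksub.mp hconj with h1 | h1
        · cases h1
        · rw [DihedralGroup.sr.injEq] at h1; exact hqne h1
      · have e : (r p * r q) * sr 0 * (r p * r q)⁻¹ = sr q := by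
          simp only [r_mul_r, DnAux.r_inv, r_mul_sr, sr_mul_r]
          congr 1; linear_combination -hpq - 2 * hq
        rw [e] at hconj
        rcases DnAux.mem_Ksub.mp hconj with h1 | h1
        · cases h1
        · rw [DihedralGroup.sr.injEq] at h1; exact hqne h1
      · have e : (r p * sr 0) * sr 0 * (r p * sr 0)⁻¹ = sr q := by
          simp only [r_mul_sr, DnAux.sr_inv, sr_mul_sr, r_mul_sr]
          congr 1; linear_combination -hpq - hq
        rw [e] at hconj
        rcases DnAux.mem_Ksub.mp hconj with h1 | h1
        · cases h1
        · rw [DihedralGroup.sr.injEq] at h1; exact hqne h1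
      · have e : (r p * sr q) * sr 0 * (r p * sr q)⁻¹ = sr q := by
          simp only [r_mul_sr, DnAux.sr_inv, sr_mul_sr, r_mul_sr]
          congr 1; linear_combination -hpq
        rw [e] at hconj
        rcases DnAux.mem_Ksub.mp hconj with h1 | h1
        · cases h1
        · rw [DihedralGroup.sr.injEq] at h1; exact hqne h1
    · -- K < H
      rw [SetLike.lt_iff_le_and_exists]
      constructor
      · intro x hx
        rcases DnAux.mem_Ksub.mp hx with rfl | rfl
        · exact DnAux.mem_Hsub.mpr (Or.inl rfl)
        · exact DnAux.mem_Hsub.mpr (Or.inr (Or.inr (Or.inl rfl)))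
      · refine ⟨r q, DnAux.mem_Hsub.mpr (Or.inr (Or.inl rfl)), ?_⟩
        intro hx
        rcases DnAux.mem_Ksub.mp hx with h1 | h1
        · rw [DihedralGroup.r.injEq] at h1; exact hqne h1
        · simp at h1
    · -- K < conjSub
      rw [SetLike.lt_iff_le_and_exists]
      constructor
      · intro x hx
        rcases DnAux.mem_Ksub.mp hx with rfl | rfl
        · refine Subgroup.mem_map.mpr ⟨r 0, DnAux.mem_Hsub.mpr (Or.inl rfl), ?_⟩
          show r p * r 0 * (r p)⁻¹ = r 0
          simp only [r_mul_r, DnAux.r_inv]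
          congr 1; ring
        · refine Subgroup.mem_map.mpr ⟨sr q, DnAux.mem_Hsub.mpr (Or.inr (Or.inr (Or.inr rfl))), ?_⟩
          show r p * sr q * (r p)⁻¹ = sr 0
          simp only [r_mul_sr, DnAux.r_inv, sr_mul_r]
          congr 1; linear_combination -hpq
      · refine ⟨r q, Subgroup.mem_map.mpr ⟨r q, DnAux.mem_Hsub.mpr (Or.inr (Or.inl rfl)), ?_⟩, ?_⟩
        · show r p * r q * (r p)⁻¹ = r q
          simp only [r_mul_r, DnAux.r_inv]
          congr 1; ring
        · intro hx
          rcases DnAux.mem_Ksub.mp hx with h1 | h1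
          · rw [DihedralGroup.r.injEq] at h1; exact hqne h1
          · simp at h1
end

section
/- In the dihedral group Dₙ with n odd, there are no homoclinic triples. In particular, if K is a subgroup of Dₙ (n odd) containing a reflection κ, and g = ρʳ for some r, and H contains both K and g⁻¹Kg, then gH intersects N(K) nontrivially. -/
private lemma r_pow' {n : ℕ} (x : ZMod n) (k : ℕ) :
    (DihedralGroup.r x) ^ k = DihedralGroup.r ((k : ZMod n) * x) := by
  induction k with
  | zero => simp
  | succ k ih => rw [pow_succ, ih, DihedralGroup.r_mul_r]; push_cast; ring_nf

/-- key halving lemma: if `r (2x) ∈ H` and `n` is odd, then `r (-x) ∈ H`. -/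
private lemma half_mem {n : ℕ} (hn : Odd n) (H : Subgroup (DihedralGroup n)) (x : ZMod n)
    (h : DihedralGroup.r (2 * x) ∈ H) : DihedralGroup.r (-x) ∈ H := by
  obtain ⟨m, hm⟩ := hn
  have := H.pow_mem h m
  rw [r_pow'] at this
  have h2 : ((m : ZMod n) * (2 * x)) = -x := by
    have hcast : ((n : ZMod n) : ZMod n) = 0 := ZMod.natCast_self n
    have : ((2 * m + 1 : ℕ) : ZMod n) = 0 := by rw [← hm]; exact ZMod.natCast_self n
    push_cast at this
    have h2m : (2 : ZMod n) * m = -1 := by linear_combination this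
    ring_nf
    linear_combination x * h2m
  rwa [h2] at this

/-- membership in normalizer from `K` being closed under conjugation. -/
private lemma mem_normalizer_of_forall {G : Type*} [Group G] {K : Subgroup G} {g : G}
    (h : ∀ k ∈ K, g * k * g⁻¹ ∈ K) (h' : ∀ k ∈ K, g⁻¹ * k * g ∈ K) :
    g ∈ Subgroup.normalizer (K : Set G) := by
  rw [Subgroup.mem_normalizer_iff]
  intro x
  constructor
  · intro hx; exact h x hx
  · intro hx
    have := h' _ hx
    simpa [mul_assoc] using this

theorem Dn_odd_no_triple (n : ℕ) (hn : Odd n) :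
    (¬ ∃ (K H : Subgroup (DihedralGroup n)) (g : DihedralGroup n),
        HomoclinicTriple K g H) ∧
    (∀ (K H : Subgroup (DihedralGroup n)) (r : ZMod n),
        (∃ i, DihedralGroup.sr i ∈ K) →
        K ≤ H → conjSub (DihedralGroup.r r)⁻¹ K ≤ H →
        ∃ h ∈ H, DihedralGroup.r r * h ∈ Subgroup.normalizer (K : Set (DihedralGroup n))) := by
  -- Second part first, as a standalone fact.
  have part2 : ∀ (K H : Subgroup (DihedralGroup n)) (r : ZMod n),
      (∃ i, DihedralGroup.sr i ∈ K) →
      K ≤ H → conjSub (DihedralGroup.r r)⁻¹ K ≤ H →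
      ∃ h ∈ H, DihedralGroup.r r * h ∈ Subgroup.normalizer (K : Set (DihedralGroup n)) := by
    intro K H r ⟨i, hiK⟩ hKH hconj
    -- `(r r)⁻¹ (sr i) (r r) = sr (i + 2r) ∈ H`
    have h1 : DihedralGroup.sr i ∈ H := hKH hiK
    have h2 : DihedralGroup.sr (i + 2 * r) ∈ H := by
      apply hconj
      refine ⟨DihedralGroup.sr i, hiK, ?_⟩
      show (DihedralGroup.r r)⁻¹ * DihedralGroup.sr i * ((DihedralGroup.r r)⁻¹)⁻¹ = _
      simp only [inv_inv]
      show DihedralGroup.r (-r) * DihedralGroup.sr i * DihedralGroup.r r = _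
      rw [DihedralGroup.r_mul_sr, DihedralGroup.sr_mul_r]
      ring_nf
    -- so `r (2r) = (sr i)⁻¹ * sr (i + 2r) ∈ H`
    have h3 : DihedralGroup.r (2 * r) ∈ H := by
      have := H.mul_mem (H.inv_mem h1) h2
      have e : (DihedralGroup.sr i)⁻¹ * DihedralGroup.sr (i + 2 * r)
          = DihedralGroup.r (2 * r) := by
        show DihedralGroup.sr i * DihedralGroup.sr (i + 2 * r) = _
        rw [DihedralGroup.sr_mul_sr]; ring_nf
      rwa [e] at this
    -- hence `r (-r) ∈ H`, and `r r * r (-r) = 1 ∈ N(K)`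
    refine ⟨DihedralGroup.r (-r), half_mem hn H r h3, ?_⟩
    have : DihedralGroup.r r * DihedralGroup.r (-r) = 1 := by
      rw [DihedralGroup.r_mul_r]; simp
    rw [this]
    exact (Subgroup.normalizer (K : Set (DihedralGroup n))).one_mem
  refine ⟨?_, part2⟩
  rintro ⟨K, H, g, hHT, hKH, hKgH⟩
  by_cases hrefl : ∃ i, DihedralGroup.sr i ∈ K
  · -- K contains a reflection
    obtain ⟨i, hiK⟩ := hrefl
    have hKH' : K ≤ H := le_of_lt hKH
    -- K ≤ g H g⁻¹, i.e. g⁻¹ K g ≤ H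
    have hginv : ∀ k ∈ K, g⁻¹ * k * g ∈ H := by
      intro k hk
      obtain ⟨h', hh', he⟩ := hKgH.le hk
      have : k = g * h' * g⁻¹ := he.symm
      rw [this]
      group
      simpa using hh'
    cases g with
    | r s =>
      -- rotation case: use part2
      have hconj : conjSub (DihedralGroup.r s)⁻¹ K ≤ H := by
        rintro x ⟨k, hk, rfl⟩
        show (DihedralGroup.r s)⁻¹ * k * ((DihedralGroup.r s)⁻¹)⁻¹ ∈ H
        rw [inv_inv]
        exact hginv k hk
      obtain ⟨h', hh', hn'⟩ := part2 K H s ⟨i, hiK⟩ hKH' hconj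
      exact hHT h' hh' hn'
    | sr s =>
      -- reflection case: g⁻¹ (sr i) g = sr (2s - i) ∈ H
      have h2 : DihedralGroup.sr (2 * s - i) ∈ H := by
        have := hginv _ hiK
        have e : (DihedralGroup.sr s)⁻¹ * DihedralGroup.sr i * DihedralGroup.sr s
            = DihedralGroup.sr (2 * s - i) := by
          show DihedralGroup.sr s * DihedralGroup.sr i * DihedralGroup.sr s = _
          rw [DihedralGroup.sr_mul_sr, DihedralGroup.r_mul_sr]
          ring_nf
        rwa [e] at this
      have h1 : DihedralGroup.sr i ∈ H := hKH' hiK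
      have h3 : DihedralGroup.r (2 * (s - i)) ∈ H := by
        have := H.mul_mem (H.inv_mem h1) h2
        have e : (DihedralGroup.sr i)⁻¹ * DihedralGroup.sr (2 * s - i)
            = DihedralGroup.r (2 * (s - i)) := by
          show DihedralGroup.sr i * DihedralGroup.sr (2 * s - i) = _
          rw [DihedralGroup.sr_mul_sr]; ring_nf
        rwa [e] at this
      have h4 : DihedralGroup.r (i - s) ∈ H := by
        have := half_mem hn H (s - i) h3
        rwa [neg_sub] at this
      refine hHT _ h4 ?_
      have e : DihedralGroup.sr s * DihedralGroup.r (i - s) = DihedralGroup.sr i := by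
        rw [DihedralGroup.sr_mul_r]; ring_nf
      rw [e]
      exact Subgroup.le_normalizer hiK
  · -- K consists only of rotations, hence is normal; g ∈ N(K)
    push_neg at hrefl
    have hconj : ∀ (x : DihedralGroup n), ∀ k ∈ K, x * k * x⁻¹ ∈ K := by
      intro x k hk
      cases k with
      | sr j => exact absurd hk (hrefl j)
      | r j =>
        cases x with
        | r a =>
          have e : DihedralGroup.r a * DihedralGroup.r j * (DihedralGroup.r a)⁻¹
              = DihedralGroup.r j := by
            show DihedralGroup.r a * DihedralGroup.r j * DihedralGroup.r (-a) = _
            rw [DihedralGroup.r_mul_r, DihedralGroup.r_mul_r]; ring_nf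
          rwa [e]
        | sr a =>
          have e : DihedralGroup.sr a * DihedralGroup.r j * (DihedralGroup.sr a)⁻¹
              = DihedralGroup.r (-j) := by
            show DihedralGroup.sr a * DihedralGroup.r j * DihedralGroup.sr a = _
            rw [DihedralGroup.sr_mul_r, DihedralGroup.sr_mul_sr]; ring_nf
          rw [e]
          have : DihedralGroup.r (-j) = (DihedralGroup.r j)⁻¹ := rfl
          rw [this]
          exact K.inv_mem hk
    have hg : g ∈ Subgroup.normalizer (K : Set (DihedralGroup n)) :=
      mem_normalizer_of_forall (hconj g) (by
        intro k hk
        have := hconj g⁻¹ k hk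
        simpa using this)
    exact hHT 1 H.one_mem (by simpa using hg)
end

section
/- Let G = D_{4n} be the dihedral group of order 8n, with generators ρ (rotation of order 4n) and κ (reflection). Let q divide n, K = ⟨κ, ρ^{4n/q}⟩ ≅ D_q, p a multiple of q with q ≠ p and p dividing 2n, H = ⟨κ, ρ^{4n/p}⟩ ≅ D_p, and g = ρʳ where r ≡ (2n/p) mod (4n/p) and the multiplicity of 2 in the prime factorization of r is at most the multiplicity of 2 in n/q. Then (K, g, H) is a homoclinic triple for G. -/
namespace D4nAux

open DihedralGroup Subgroup

variable {N : ℕ}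

lemma r_inv (i : ZMod N) : (r i : DihedralGroup N)⁻¹ = r (-i) := rfl
lemma sr_inv (i : ZMod N) : (sr i : DihedralGroup N)⁻¹ = sr i := rfl

lemma r_pow (i : ZMod N) (k : ℕ) : (r i : DihedralGroup N) ^ k = r (k • i) := by
  induction k with
  | zero => simp [one_def, -r_zero]
  | succ k ih => rw [pow_succ, ih, r_mul_r, succ_nsmul]

lemma r_zpow (i : ZMod N) (k : ℤ) : (r i : DihedralGroup N) ^ k = r (k • i) := by
  cases k with
  | ofNat m => rw [Int.ofNat_eq_coe, zpow_natCast, r_pow, natCast_zsmul]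
  | negSucc m => rw [zpow_negSucc, r_pow, r_inv, negSucc_zsmul]

/-- The "dihedral" subgroup generated by `sr 0` and `r a`. -/
def dk (a : ZMod N) : Subgroup (DihedralGroup N) where
  carrier := {x | ∃ k : ℤ, x = r (k • a) ∨ x = sr (k • a)}
  one_mem' := ⟨0, Or.inl (by simp [one_def, -r_zero])⟩
  mul_mem' := by
    rintro x y ⟨k, rfl | rfl⟩ ⟨l, rfl | rfl⟩
    · exact ⟨k + l, Or.inl (by rw [r_mul_r, add_zsmul])⟩
    · exact ⟨l - k, Or.inr (by rw [r_mul_sr, sub_zsmul, sub_eq_add_neg])⟩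
    · exact ⟨k + l, Or.inr (by rw [sr_mul_r, add_zsmul])⟩
    · exact ⟨l - k, Or.inl (by rw [sr_mul_sr, sub_zsmul, sub_eq_add_neg])⟩
  inv_mem' := by
    rintro x ⟨k, rfl | rfl⟩
    · exact ⟨-k, Or.inl (by rw [r_inv, neg_zsmul])⟩
    · exact ⟨k, Or.inr (by rw [sr_inv])⟩

lemma mem_dk {a : ZMod N} {x : DihedralGroup N} :
    x ∈ dk a ↔ ∃ k : ℤ, x = r (k • a) ∨ x = sr (k • a) := Iff.rfl

lemma closure_eq (a : ZMod N) :
    Subgroup.closure {sr 0, r a} = (dk a : Subgroup (DihedralGroup N)) := by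
  apply le_antisymm
  · rw [Subgroup.closure_le]
    rintro x (rfl | rfl)
    · exact ⟨0, Or.inr (by simp)⟩
    · exact ⟨1, Or.inl (by simp)⟩
  · rintro x ⟨k, rfl | rfl⟩
    · rw [← r_zpow]
      exact zpow_mem (Subgroup.subset_closure (by simp)) k
    · have : (sr (k • a) : DihedralGroup N) = sr 0 * (r a) ^ k := by
        rw [r_zpow, sr_mul_r, zero_add]
      rw [this]
      exact mul_mem (Subgroup.subset_closure (by simp))
        (zpow_mem (Subgroup.subset_closure (by simp)) k)

end D4nAux

namespace D4nAux

lemma keyNat (u c : ℕ) (hc : 0 < c)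
    (h : padicValNat 2 c ≤ padicValNat 2 u) (w : ℕ) (hw : Odd w) :
    ¬ (4 * u ∣ 2 * c * w) := by
  haveI : Fact (Nat.Prime 2) := ⟨Nat.prime_two⟩
  intro hd
  have hw1 : w % 2 = 1 := Nat.odd_iff.mp hw
  have hw0 : w ≠ 0 := by omega
  have hcw : 2 * c * w ≠ 0 := by positivity
  have h1 : (2:ℕ) ^ (padicValNat 2 u + 2) ∣ 4 * u := by
    rw [pow_add]
    have : (2:ℕ)^2 = 4 := by norm_num
    calc (2:ℕ) ^ padicValNat 2 u * 2 ^ 2 = 4 * 2 ^ padicValNat 2 u := by ring_nf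
    _ ∣ 4 * u := Nat.mul_dvd_mul_left 4 pow_padicValNat_dvd
  have h2 : (2:ℕ) ^ (padicValNat 2 c + 2) ∣ 2 * c * w :=
    dvd_trans (pow_dvd_pow 2 (by omega)) (h1.trans hd)
  rw [padicValNat_dvd_iff_le hcw] at h2
  have h3 : padicValNat 2 (2 * c * w) = padicValNat 2 c + 1 := by
    rw [padicValNat.mul (by omega) hw0, padicValNat.mul two_ne_zero (by omega),
      padicValNat.self one_lt_two, padicValNat.eq_zero_of_not_dvd (n := w) (by omega)]
    ring
  omega

lemma keyInt (u c : ℕ) (hc : 0 < c)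
    (h : padicValNat 2 c ≤ padicValNat 2 u) (w : ℤ) (hw : Odd w) :
    ¬ ((4 * (u:ℤ)) ∣ 2 * (c:ℤ) * w) := by
  intro hd
  have h1 := Int.natAbs_dvd_natAbs.mpr hd
  simp only [Int.natAbs_mul, Int.natAbs_natCast] at h1
  exact keyNat u c hc h w.natAbs (Int.natAbs_odd.mpr hw)
    (by simpa [Int.natAbs_natCast] using h1)

end D4nAux


open DihedralGroup D4nAux

theorem D4n_triples (n q p r : ℕ) (hn : 0 < n) (hq : q ∣ n)
    (hqp : q ∣ p) (hne : q ≠ p) (hp : p ∣ 2 * n) (hr : 0 < r)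
    (hcong : r % (4 * n / p) = (2 * n / p) % (4 * n / p))
    (ht2 : padicValNat 2 r ≤ padicValNat 2 (n / q)) :
    HomoclinicTriple
      (Subgroup.closure {DihedralGroup.sr 0,
          DihedralGroup.r ((4 * n / q : ℕ) : ZMod (4 * n))} :
        Subgroup (DihedralGroup (4 * n)))
      (DihedralGroup.r ((r : ℕ) : ZMod (4 * n)))
      (Subgroup.closure {DihedralGroup.sr 0,
          DihedralGroup.r ((4 * n / p : ℕ) : ZMod (4 * n))}) := by
  haveI : NeZero (4 * n) := ⟨by omega⟩
  have hq0 : 0 < q := Nat.pos_of_dvd_of_pos hq hn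
  have hp0 : 0 < p := Nat.pos_of_dvd_of_pos hp (by omega)
  set u := n / q with hu_def
  have hnu : n = q * u := (Nat.mul_div_cancel' hq).symm
  have hu0 : 0 < u := Nat.div_pos (Nat.le_of_dvd hn hq) hq0
  obtain ⟨s, hps⟩ := hqp
  have hs2 : 2 ≤ s := by
    have hs0 : s ≠ 0 := by rintro h; rw [h, mul_zero] at hps; omega
    have hs1 : s ≠ 1 := by rintro h; rw [h, mul_one] at hps; exact hne hps.symm
    omega
  set c := 2 * n / p with hc_def
  have hc2n : c * p = 2 * n := Nat.div_mul_cancel hp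
  have hc0 : 0 < c := by
    rcases Nat.eq_zero_or_pos c with h | h
    · rw [h, zero_mul] at hc2n; omega
    · exact h
  set b := 4 * n / p with hb_def
  have hb : b = 2 * c := by
    rw [hb_def, hc_def, show 4 * n = 2 * (2 * n) by ring, Nat.mul_div_assoc 2 hp]
  set a := 4 * n / q with ha_def
  have ha : a = 4 * u := by
    rw [ha_def, hnu, show 4 * (q * u) = q * (4 * u) by ring, Nat.mul_div_cancel_left _ hq0]
  have hcs : c * s = 2 * u := by
    have h1 : q * (c * s) = q * (2 * u) := by
      calc q * (c * s) = c * (q * s) := by ring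
      _ = 2 * (q * u) := by rw [← hps, hc2n, hnu]
      _ = q * (2 * u) := by ring
    exact Nat.eq_of_mul_eq_mul_left hq0 h1
  have hba : b * s = a := by
    rw [hb, ha, mul_assoc, hcs]; ring
  have hcb : c < b := by omega
  have hrc : r % b = c := hcong.trans (Nat.mod_eq_of_lt hcb)
  set m := r / b with hm_def
  have hrm : r = c * (2 * m + 1) := by
    have h1 : b * m + r % b = r := Nat.div_add_mod r b
    rw [hrc, hb] at h1
    rw [show c * (2 * m + 1) = 2 * c * m + c by ring, h1]
  have hkey : padicValNat 2 c ≤ padicValNat 2 u := by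
    have h1 : padicValNat 2 r = padicValNat 2 c := by
      rw [hrm, padicValNat.mul (by omega) (by omega),
        padicValNat.eq_zero_of_not_dvd (n := 2 * m + 1) (by omega), add_zero]
    omega
  have haz : ((a : ℕ) : ℤ) = 4 * (u : ℤ) := by rw [ha]; push_cast; ring
  have haN : ((a : ℕ) : ℤ) ∣ ((4 * n : ℕ) : ℤ) := by
    have : a ∣ 4 * n := ⟨q, by rw [ha, hnu]; ring⟩
    exact_mod_cast this
  have hmod : ∀ x y : ℤ, ((x : ZMod (4 * n)) = (y : ZMod (4 * n))) →
      ((4 * n : ℕ) : ℤ) ∣ y - x := fun x y h =>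
    ((ZMod.intCast_eq_intCast_iff _ _ _).mp h).dvd
  have hnd : ∀ w : ℤ, Odd w → ¬ (((a : ℕ) : ℤ) ∣ 2 * (c : ℤ) * w) := by
    intro w hw hdvd
    rw [haz] at hdvd
    exact keyInt u c hc0 hkey w hw hdvd
  -- membership of r b̄ fails in dk ā
  rw [show (Subgroup.closure {sr 0, DihedralGroup.r ((a:ℕ) : ZMod (4*n))} :
      Subgroup (DihedralGroup (4*n))) = dk ((a:ℕ) : ZMod (4*n)) from closure_eq _,
    show (Subgroup.closure {sr 0, DihedralGroup.r ((b:ℕ) : ZMod (4*n))} :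
      Subgroup (DihedralGroup (4*n))) = dk ((b:ℕ) : ZMod (4*n)) from closure_eq _]
  have harg : ∀ k : ℤ, k • ((a:ℕ) : ZMod (4*n)) = (k * s) • ((b:ℕ) : ZMod (4*n)) := by
    intro k
    rw [← hba]
    push_cast [zsmul_eq_mul]
    ring
  have hrbH : (DihedralGroup.r ((b:ℕ) : ZMod (4*n))) ∈ dk ((b:ℕ) : ZMod (4*n)) :=
    ⟨1, Or.inl (by rw [one_zsmul])⟩
  have hrbK : (DihedralGroup.r ((b:ℕ) : ZMod (4*n))) ∉ dk ((a:ℕ) : ZMod (4*n)) := by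
    rintro ⟨l, h' | h'⟩
    · rw [DihedralGroup.r.injEq, zsmul_eq_mul] at h'
      have h2 : ((4*n:ℕ):ℤ) ∣ (l * a) - (b:ℤ) := by
        apply hmod
        push_cast
        exact h'
      have h3 : ((a:ℕ):ℤ) ∣ (b:ℤ) := by
        have h4 := dvd_sub (dvd_mul_left ((a:ℕ):ℤ) l) (haN.trans h2)
        simpa using h4
      have h5 : a ∣ b := by exact_mod_cast h3
      have h6 : a ≤ b := Nat.le_of_dvd (by omega) h5
      have h7 : 2 * b ≤ a := by
        calc 2 * b ≤ s * b := Nat.mul_le_mul_right b hs2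
        _ = a := by rw [mul_comm]; exact hba
      omega
    · exact absurd h' (by simp)
  refine ⟨?_, ?_, ?_⟩
  · intro h hh hmem
    obtain ⟨k, rfl | rfl⟩ := hh
    · have hc' := (Subgroup.mem_normalizer_iff.mp hmem (sr 0)).mp ⟨0, Or.inr (by simp)⟩
      have heq : (DihedralGroup.r ((r:ℕ) : ZMod (4*n)) * DihedralGroup.r (k • ((b:ℕ):ZMod (4*n)))) * sr 0 *
          (DihedralGroup.r ((r:ℕ) : ZMod (4*n)) * DihedralGroup.r (k • ((b:ℕ):ZMod (4*n))))⁻¹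
          = sr (0 - (((r:ℕ):ZMod (4*n)) + k • ((b:ℕ):ZMod (4*n))) +
              -(((r:ℕ):ZMod (4*n)) + k • ((b:ℕ):ZMod (4*n)))) := rfl
      rw [heq] at hc'
      obtain ⟨l, h' | h'⟩ := hc'
      · exact absurd h' (by simp)
      · rw [DihedralGroup.sr.injEq, zsmul_eq_mul, zsmul_eq_mul] at h'
        have h2 : ((4*n:ℕ):ℤ) ∣ (l * a) - (-(2*(r:ℤ) + 2*k*(b:ℤ))) := by
          apply hmod
          push_cast
          linear_combination h'
        have h4 : ((a:ℕ):ℤ) ∣ (2*(r:ℤ) + 2*k*(b:ℤ)) := by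
          have h5 := dvd_sub (haN.trans h2) (dvd_mul_left ((a:ℕ):ℤ) l)
          have h6 : (l * (a:ℤ) - -(2*(r:ℤ) + 2*k*(b:ℤ))) - l * (a:ℤ)
              = 2*(r:ℤ) + 2*k*(b:ℤ) := by ring
          rwa [h6] at h5
        have h5 : (2*(r:ℤ) + 2*k*(b:ℤ)) = 2*(c:ℤ)*(2*(m:ℤ)+1+2*k) := by
          push_cast [hrm, hb]
          ring
        rw [h5] at h4
        exact hnd _ ⟨(m:ℤ) + k, by ring⟩ h4
    · have hc' := (Subgroup.mem_normalizer_iff.mp hmem (sr 0)).mp ⟨0, Or.inr (by simp)⟩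
      have heq : (DihedralGroup.r ((r:ℕ) : ZMod (4*n)) * sr (k • ((b:ℕ):ZMod (4*n)))) * sr 0 *
          (DihedralGroup.r ((r:ℕ) : ZMod (4*n)) * sr (k • ((b:ℕ):ZMod (4*n))))⁻¹
          = sr ((k • ((b:ℕ):ZMod (4*n)) - ((r:ℕ):ZMod (4*n))) -
              (0 - (k • ((b:ℕ):ZMod (4*n)) - ((r:ℕ):ZMod (4*n))))) := rfl
      rw [heq] at hc'
      obtain ⟨l, h' | h'⟩ := hc'
      · exact absurd h' (by simp)
      · rw [DihedralGroup.sr.injEq, zsmul_eq_mul, zsmul_eq_mul] at h'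
        have h2 : ((4*n:ℕ):ℤ) ∣ (l * a) - (2*k*(b:ℤ) - 2*(r:ℤ)) := by
          apply hmod
          push_cast
          linear_combination h'
        have h4 : ((a:ℕ):ℤ) ∣ (2*(r:ℤ) - 2*k*(b:ℤ)) := by
          have h5 := dvd_sub (haN.trans h2) (dvd_mul_left ((a:ℕ):ℤ) l)
          have h6 : (l * (a:ℤ) - (2*k*(b:ℤ) - 2*(r:ℤ))) - l * (a:ℤ)
              = 2*(r:ℤ) - 2*k*(b:ℤ) := by ring
          rwa [h6] at h5
        have h5 : (2*(r:ℤ) - 2*k*(b:ℤ)) = 2*(c:ℤ)*(2*(m:ℤ)+1-2*k) := by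
          push_cast [hrm, hb]
          ring
        rw [h5] at h4
        exact hnd _ ⟨(m:ℤ) - k, by ring⟩ h4
  · rw [SetLike.lt_iff_le_and_exists]
    refine ⟨?_, DihedralGroup.r ((b:ℕ):ZMod (4*n)), hrbH, hrbK⟩
    intro x hx
    obtain ⟨k, rfl | rfl⟩ := hx
    · exact ⟨k * s, Or.inl (by rw [harg k])⟩
    · exact ⟨k * s, Or.inr (by rw [harg k])⟩
  · rw [SetLike.lt_iff_le_and_exists]
    have hfix : ∀ i : ZMod (4*n), (MulAut.conj (DihedralGroup.r ((r:ℕ):ZMod (4*n)))).toMonoidHom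
        (DihedralGroup.r i) = DihedralGroup.r i := by
      intro i
      simp only [MulEquiv.coe_toMonoidHom, MulAut.conj_apply, r_inv, r_mul_r,
        DihedralGroup.r.injEq]
      ring
    refine ⟨?_, DihedralGroup.r ((b:ℕ):ZMod (4*n)),
      Subgroup.mem_map.mpr ⟨_, hrbH, hfix _⟩, hrbK⟩
    intro x hx
    obtain ⟨k, rfl | rfl⟩ := hx
    · exact Subgroup.mem_map.mpr ⟨DihedralGroup.r (k • ((a:ℕ):ZMod (4*n))),
        ⟨k*s, Or.inl (by rw [harg k])⟩, hfix _⟩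
    · have h2r : (2*r : ℕ) = b * (2*m+1) := by rw [hrm, hb]; ring
      have hcast : ((r:ℕ) : ZMod (4*n)) + ((r:ℕ) : ZMod (4*n))
          = ((2*(m:ℤ)+1 : ℤ)) • ((b:ℕ) : ZMod (4*n)) := by
        have h3 := congrArg (fun t : ℕ => (t : ZMod (4*n))) h2r
        push_cast [zsmul_eq_mul] at h3 ⊢
        linear_combination h3
      refine Subgroup.mem_map.mpr ⟨sr (k • ((a:ℕ):ZMod (4*n)) +
          (((r:ℕ):ZMod (4*n)) + ((r:ℕ):ZMod (4*n)))),
        ⟨k*s + (2*(m:ℤ)+1), Or.inr ?_⟩, ?_⟩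
      · rw [DihedralGroup.sr.injEq, add_zsmul, ← hcast, harg k]
      · simp only [MulEquiv.coe_toMonoidHom, MulAut.conj_apply, r_inv, r_mul_sr, sr_mul_r,
          DihedralGroup.sr.injEq]
        ring
end
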